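/- arXiv:2212.10967 — 5 statements merged into one kernel-verified Lean document; each statement's English description precedes it below -/
import Mathlib

section
/- For any convex body C in ℝⁿ (compact convex with nonempty interior), the function δ(X) := R(X,C), the circumradius of X with respect to C, defined on nonempty finite subsets X of ℝⁿ (with δ(∅)=0), is a diversity on ℝⁿ. -/
open Pointwise

def IsDiversity {X : Type*} [DecidableEq X] (δ : Finset X → ℝ) : Prop :=
  (∀ A, 0 ≤ δ A) ∧ (∀ A, δ A = 0 ↔ A.card ≤ 1) ∧
  ∀ A B C : Finset X, B.Nonempty → δ (A ∪ C) ≤ δ (A ∪ B) + δ (B ∪ C)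

/-- `circumradius X C` is the smallest `r ≥ 0` such that some translate of `X`
is contained in `r • C`. -/
noncomputable def circumradius {n : ℕ} (X C : Set (Fin n → ℝ)) : ℝ :=
  sInf {r : ℝ | 0 ≤ r ∧ ∃ x : Fin n → ℝ, x +ᵥ X ⊆ r • C}

lemma circum_set_nonempty {n : ℕ} {C : Set (Fin n → ℝ)} (hint : (interior C).Nonempty)
    (A : Finset (Fin n → ℝ)) :
    {r : ℝ | 0 ≤ r ∧ ∃ x : Fin n → ℝ, x +ᵥ (A : Set (Fin n → ℝ)) ⊆ r • C}.Nonempty := by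
  obtain ⟨c, hc⟩ := hint
  obtain ⟨ε, hε, hball⟩ := Metric.mem_nhds_iff.mp (mem_interior_iff_mem_nhds.mp hc)
  have hCsub : Metric.ball c ε ⊆ C := hball
  obtain ⟨M0, hM0⟩ := (A.finite_toSet.isBounded).subset_closedBall 0
  set M : ℝ := max M0 0 with hM
  have hMA : ∀ a ∈ A, ‖a‖ ≤ M := by
    intro a ha
    have := hM0 ha
    simp [Metric.mem_closedBall, dist_zero_right] at this
    exact this.trans (le_max_left _ _)
  set r : ℝ := (M + 1) / ε with hr
  have hr0 : 0 < r := by positivity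
  refine ⟨r, ⟨hr0.le, r • c, ?_⟩⟩
  rintro p ⟨a, ha, rfl⟩
  refine ⟨c + r⁻¹ • a, hCsub ?_, ?_⟩
  · have : ‖r⁻¹ • a‖ < ε := by
      rw [norm_smul, norm_inv, Real.norm_of_nonneg hr0.le]
      have hM1 : ‖a‖ < r * ε := by
        have : r * ε = M + 1 := by
          rw [hr]; exact div_mul_cancel₀ _ hε.ne'
        rw [this]
        have := hMA a ha
        linarith
      calc r⁻¹ * ‖a‖ < r⁻¹ * (r * ε) := by
            exact mul_lt_mul_of_pos_left hM1 (inv_pos.mpr hr0)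
        _ = ε := by field_simp
    simpa [Metric.mem_ball, dist_eq_norm, add_sub_cancel_left] using this
  · show r • (c + r⁻¹ • a) = r • c +ᵥ a
    rw [vadd_eq_add, smul_add, smul_inv_smul₀ hr0.ne']

/-- For a convex body `C`, the circumradius functional `δ(X) := R(X,C)` on finite
subsets of `ℝⁿ` is a diversity. -/
theorem circumradius_isDiversity {n : ℕ} (C : Set (Fin n → ℝ))
    (hC : IsCompact C) (hconv : Convex ℝ C) (hint : (interior C).Nonempty) :
    IsDiversity (fun A : Finset (Fin n → ℝ) => circumradius (A : Set (Fin n → ℝ)) C) := by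
  have hCne : C.Nonempty := hint.mono interior_subset
  have hbdd : ∀ A : Finset (Fin n → ℝ),
      BddBelow {r : ℝ | 0 ≤ r ∧ ∃ x : Fin n → ℝ, x +ᵥ (A : Set (Fin n → ℝ)) ⊆ r • C} :=
    fun A => ⟨0, fun r hr => hr.1⟩
  have hnonneg : ∀ A : Finset (Fin n → ℝ), 0 ≤ circumradius (A : Set (Fin n → ℝ)) C := by
    intro A
    exact Real.sInf_nonneg (fun r hr => hr.1)
  refine ⟨hnonneg, ?_, ?_⟩
  · -- δ A = 0 ↔ card ≤ 1
    intro A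
    constructor
    · intro h0
      by_contra hcard
      push_neg at hcard
      obtain ⟨a, ha, b, hb, hab⟩ := Finset.one_lt_card.mp hcard
      -- diam C is positive
      obtain ⟨c, hc⟩ := id hint
      obtain ⟨ε, hε, hball⟩ := Metric.mem_nhds_iff.mp (mem_interior_iff_mem_nhds.mp hc)
      have hCsub : Metric.ball c ε ⊆ C := hball
      set w : Fin n → ℝ := ‖a - b‖⁻¹ • (a - b) with hw
      have hwn : ‖w‖ = 1 := norm_smul_inv_norm (sub_ne_zero.mpr hab)
      have hc1 : c ∈ C := hCsub (Metric.mem_ball_self hε)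
      have hc2 : c + (ε / 2) • w ∈ C := by
        apply hCsub
        simp only [Metric.mem_ball, dist_eq_norm, add_sub_cancel_left, norm_smul, hwn,
          mul_one, Real.norm_eq_abs, abs_of_pos (half_pos hε)]
        linarith
      have hD : 0 < Metric.diam C := by
        have hle : dist (c + (ε / 2) • w) c ≤ Metric.diam C :=
          Metric.dist_le_diam_of_mem hC.isBounded hc2 hc1
        have : dist (c + (ε / 2) • w) c = ε / 2 := by
          rw [dist_eq_norm, add_sub_cancel_left, norm_smul, hwn, mul_one,
            Real.norm_eq_abs, abs_of_pos (half_pos hε)]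
        linarith
      have hd : 0 < dist a b := dist_pos.mpr hab
      have hlow : dist a b / Metric.diam C ≤ circumradius (A : Set (Fin n → ℝ)) C := by
        apply le_csInf (circum_set_nonempty hint A)
        rintro r ⟨hr0, x, hx⟩
        have hxa : x + a ∈ r • C := hx ⟨a, ha, rfl⟩
        have hxb : x + b ∈ r • C := hx ⟨b, hb, rfl⟩
        obtain ⟨p, hp, hpe⟩ := hxa
        obtain ⟨q, hq, hqe⟩ := hxb
        have : dist a b = r * dist p q := by
          rw [← dist_add_left x a b, ← hpe, ← hqe, dist_smul₀, Real.norm_of_nonneg hr0]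
        rw [div_le_iff₀ hD, this]
        have := Metric.dist_le_diam_of_mem hC.isBounded hp hq
        nlinarith
      have : (0:ℝ) < dist a b / Metric.diam C := by positivity
      simp only at h0
      linarith
    · intro hcard
      obtain ⟨a, hsub⟩ := Finset.card_le_one_iff_subset_singleton.mp hcard
      have h0mem : (0:ℝ) ∈ {r : ℝ | 0 ≤ r ∧ ∃ x : Fin n → ℝ,
          x +ᵥ (A : Set (Fin n → ℝ)) ⊆ r • C} := by
        refine ⟨le_refl 0, -a, ?_⟩
        rintro p ⟨u, hu, rfl⟩
        have : u = a := by
          have := hsub hu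
          simpa using this
        rw [Set.zero_smul_set hCne]
        simp [vadd_eq_add, this]
      have h1 : circumradius (A : Set (Fin n → ℝ)) C ≤ 0 := csInf_le (hbdd A) h0mem
      have h2 := hnonneg A
      simp only at h2 ⊢
      linarith
  · -- triangle inequality
    intro A B C' hB
    simp only
    apply le_of_forall_pos_le_add
    intro ε hε
    obtain ⟨r, hrS, hr⟩ := Real.lt_sInf_add_pos (circum_set_nonempty hint (A ∪ B)) (half_pos hε)
    obtain ⟨s, hsS, hs⟩ := Real.lt_sInf_add_pos (circum_set_nonempty hint (B ∪ C')) (half_pos hε)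
    obtain ⟨hr0, x, hx⟩ := hrS
    obtain ⟨hs0, y, hy⟩ := hsS
    obtain ⟨b, hb⟩ := hB
    have key : (r + s) ∈ {t : ℝ | 0 ≤ t ∧ ∃ z : Fin n → ℝ,
        z +ᵥ ((A ∪ C' : Finset (Fin n → ℝ)) : Set (Fin n → ℝ)) ⊆ t • C} := by
      refine ⟨by linarith, x + y + b, ?_⟩
      rintro p ⟨u, hu, rfl⟩
      rw [hconv.add_smul hr0 hs0]
      rw [Finset.coe_union, Set.mem_union] at hu
      have hyb : y + b ∈ s • C := hy ⟨b, by simp [hb], rfl⟩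
      have hxb : x + b ∈ r • C := hx ⟨b, by simp [hb], rfl⟩
      rcases hu with hu | hu
      · have hxu : x + u ∈ r • C := hx ⟨u, by simp [hu], rfl⟩
        have := Set.add_mem_add hxu hyb
        convert this using 1
        simp [vadd_eq_add]
        abel
      · have hyu : y + u ∈ s • C := hy ⟨u, by simp [hu], rfl⟩
        have := Set.add_mem_add hxb hyu
        convert this using 1
        simp [vadd_eq_add]
        abel
    have := csInf_le (hbdd (A ∪ C')) key
    unfold circumradius at *
    linarith
end

section
/- Let C ⊂ ℝⁿ be a convex body with R(−C, C) = 1 (i.e., some translate of −C is contained in C, and 1 is the smallest such scaling). Then C is centrally symmetric, i.e., x − C = C for some x ∈ ℝⁿ. -/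
open Pointwise

open MeasureTheory in
lemma eq_of_subset_of_measure_eq_aux {n : ℕ} {D C : Set (Fin n → ℝ)}
    (hDC : D ⊆ C) (hDconv : Convex ℝ D) (hDcl : IsClosed D)
    (hCcomp : IsCompact C) (hCconv : Convex ℝ C) (hCint : (interior C).Nonempty)
    (hvol : volume D = volume C) : D = C := by
  refine Set.Subset.antisymm hDC fun p hp => ?_
  by_contra hpD
  obtain ⟨f, u, hfD, hfp⟩ := geometric_hahn_banach_closed_point hDconv hDcl hpD
  obtain ⟨q0, hq0⟩ := hCint
  -- find z ∈ interior C with u < f z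
  have hz : ∃ z ∈ interior C, u < f z := by
    obtain ⟨t, ht0, ht1, htf⟩ : ∃ t : ℝ, 0 < t ∧ t < 1 ∧ u < t * f q0 + (1 - t) * f p := by
      have hcont : Continuous fun t : ℝ => t * f q0 + (1 - t) * f p := by continuity
      have h : Filter.Tendsto (fun t : ℝ => t * f q0 + (1 - t) * f p)
          (nhdsWithin 0 (Set.Ioo 0 1)) (nhds (0 * f q0 + (1 - 0) * f p)) :=
        (hcont.tendsto 0).mono_left nhdsWithin_le_nhds
      have h2 : ∀ᶠ t in nhdsWithin (0:ℝ) (Set.Ioo 0 1), u < t * f q0 + (1 - t) * f p := by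
        apply h.eventually
        apply eventually_gt_nhds
        simpa using hfp
      have h3 : (nhdsWithin (0:ℝ) (Set.Ioo 0 1)).NeBot :=
        IsGLB.nhdsWithin_neBot (isGLB_Ioo one_pos) (Set.nonempty_Ioo.2 one_pos)
      obtain ⟨t, ht, ht'⟩ := (h2.and (self_mem_nhdsWithin : Set.Ioo (0:ℝ) 1 ∈ _)).exists
      exact ⟨t, ht'.1, ht'.2, ht⟩
    refine ⟨t • q0 + (1 - t) • p, ?_, ?_⟩
    · exact hCconv.combo_interior_closure_mem_interior hq0 (subset_closure hp) ht0
        (by linarith) (by ring)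
    · simpa using htf
  obtain ⟨z, hzC, hzf⟩ := hz
  set V := interior C ∩ f ⁻¹' (Set.Ioi u) with hV
  have hVopen : IsOpen V := isOpen_interior.inter (isOpen_Ioi.preimage f.continuous)
  have hVpos : 0 < volume V := hVopen.measure_pos _ ⟨z, hzC, hzf⟩
  have hVsub : V ⊆ C \ D := by
    rintro y ⟨hy1, hy2⟩
    refine ⟨interior_subset hy1, fun hyD => ?_⟩
    exact absurd (hfD y hyD) (not_lt.2 (le_of_lt hy2))
  have hDfin : volume D ≠ ⊤ := by
    rw [hvol]; exact hCcomp.measure_lt_top.ne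
  have : volume (C \ D) = 0 := by
    rw [measure_diff hDC hDcl.measurableSet.nullMeasurableSet hDfin, hvol, tsub_self]
  exact absurd (lt_of_lt_of_le hVpos (measure_mono hVsub)) (by rw [this]; exact lt_irrefl 0)

/-- A convex body `C` with `R(-C, C) = 1` is centrally symmetric:
`x - C = C` for some `x`. -/
theorem symmetric_of_circumradius_neg_eq_one {n : ℕ} (C : Set (Fin n → ℝ))
    (hC : IsCompact C) (hconv : Convex ℝ C) (hint : (interior C).Nonempty)
    (hR : circumradius (-C) C = 1) :
    ∃ x : Fin n → ℝ, x +ᵥ (-C) = C := by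
  -- Step 1: the infimum is attained: there is `x` with `x +ᵥ (-C) ⊆ C`.
  have hstep1 : ∃ x : Fin n → ℝ, x +ᵥ (-C) ⊆ C := by
    set S := {r : ℝ | 0 ≤ r ∧ ∃ x : Fin n → ℝ, x +ᵥ (-C) ⊆ r • C} with hSdef
    have hSbdd : BddBelow S := ⟨0, fun r hr => hr.1⟩
    have hInf : sInf S = 1 := hR
    have hSne : S.Nonempty := by
      by_contra h
      rw [Set.not_nonempty_iff_eq_empty] at h
      rw [h, Real.sInf_empty] at hInf
      norm_num at hInf
    obtain ⟨c0, hc0⟩ : C.Nonempty := hint.mono interior_subset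
    obtain ⟨M, hM⟩ := hC.isBounded.subset_closedBall 0
    have hM0 : 0 ≤ M := by
      have := hM hc0
      simpa using (norm_nonneg c0).trans (by simpa [Metric.mem_closedBall] using this)
    have h1 : ∀ k : ℕ, ∃ s ∈ S, s < 1 + 1/(k+1) := by
      intro k
      apply exists_lt_of_csInf_lt hSne
      rw [hInf]
      have : (0:ℝ) < 1/(k+1) := by positivity
      linarith
    choose s hsS hslt using h1
    have hs1 : ∀ k, 1 ≤ s k := fun k => hInf ▸ csInf_le hSbdd (hsS k)
    have hs2 : ∀ k, s k ≤ 2 := fun k => by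
      have h := hslt k
      have : 1/((k:ℝ)+1) ≤ 1 := by
        rw [div_le_one (by positivity)]; linarith [Nat.cast_nonneg (α := ℝ) k]
      linarith
    choose x0 hx0 using fun k => (hsS k).2
    have hstend : Filter.Tendsto s Filter.atTop (nhds 1) := by
      have hub : Filter.Tendsto (fun k : ℕ => 1 + 1/((k:ℝ)+1)) Filter.atTop (nhds (1+0)) :=
        Filter.Tendsto.const_add 1 tendsto_one_div_add_atTop_nhds_zero_nat
      rw [add_zero] at hub
      exact tendsto_of_tendsto_of_tendsto_of_le_of_le tendsto_const_nhds hub hs1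
        (fun k => (hslt k).le)
    -- boundedness of x0
    have hxball : ∀ k, x0 k ∈ Metric.closedBall (0 : Fin n → ℝ) (3*M) := by
      intro k
      have hmem : x0 k + (-c0) ∈ s k • C := hx0 k (Set.vadd_mem_vadd_set (Set.neg_mem_neg.2 hc0))
      obtain ⟨c, hcC, hc⟩ := hmem
      have h1 : x0 k = s k • c + c0 := by
        funext i
        have h := congrFun hc i
        simp [Pi.smul_apply, smul_eq_mul] at h ⊢
        linarith
      rw [Metric.mem_closedBall, dist_zero_right, h1]
      calc ‖s k • c + c0‖ ≤ ‖s k • c‖ + ‖c0‖ := norm_add_le _ _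
        _ ≤ |s k| * ‖c‖ + ‖c0‖ := by rw [norm_smul]; rfl
        _ ≤ 2 * M + M := by
            have hcball : ‖c‖ ≤ M := by
              simpa [Metric.mem_closedBall, dist_zero_right] using hM hcC
            have hc0ball : ‖c0‖ ≤ M := by
              simpa [Metric.mem_closedBall, dist_zero_right] using hM hc0
            have : |s k| = s k := abs_of_nonneg (by linarith [hs1 k])
            nlinarith [norm_nonneg c, hs1 k, hs2 k]
        _ ≤ 3*M := by linarith
    obtain ⟨x, hxmem, φ, hφ, hxtend⟩ :=
      (isCompact_closedBall (0 : Fin n → ℝ) (3*M)).tendsto_subseq hxball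
    refine ⟨x, ?_⟩
    rintro _ ⟨q, hq, rfl⟩
    have hsne : ∀ j, s (φ j) ≠ 0 := fun j => by linarith [hs1 (φ j)]
    have hmemC : ∀ j, (s (φ j))⁻¹ • (x0 (φ j) + q) ∈ C := by
      intro j
      have hmem : x0 (φ j) + q ∈ s (φ j) • C := hx0 (φ j) (Set.vadd_mem_vadd_set hq)
      exact (Set.mem_smul_set_iff_inv_smul_mem₀ (hsne j) _ _).1 hmem
    have htend : Filter.Tendsto (fun j => (s (φ j))⁻¹ • (x0 (φ j) + q)) Filter.atTop
        (nhds ((1:ℝ)⁻¹ • (x + q))) := by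
      apply Filter.Tendsto.smul
      · exact (hstend.comp hφ.tendsto_atTop).inv₀ one_ne_zero
      · exact hxtend.add tendsto_const_nhds
    rw [inv_one, one_smul] at htend
    have : x + q ∈ C := hC.isClosed.mem_of_tendsto htend (Filter.Eventually.of_forall hmemC)
    simpa [vadd_eq_add] using this
  -- Step 2: equality by volumes
  obtain ⟨x, hx⟩ := hstep1
  refine ⟨x, ?_⟩
  have hDconv : Convex ℝ (x +ᵥ (-C)) := (hconv.neg).vadd x
  have hDcomp : IsCompact (x +ᵥ (-C)) := hC.neg.vadd x
  have hvol : MeasureTheory.volume (x +ᵥ (-C)) = MeasureTheory.volume C := by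
    rw [MeasureTheory.measure_vadd, MeasureTheory.Measure.measure_neg]
  exact eq_of_subset_of_measure_eq_aux hx hDconv hDcomp.isClosed hC hconv hint hvol
end

section
/- Let p₁ = (−√3/2, −1/2), p₂ = (√3/2, −1/2), p₃ = (0,1). Given positive reals R₁₂, R₁₃, R₂₃ with R₁₃ ≤ R₁₂ and R₁₂ − R₁₃ ≤ R₂₃ ≤ R₁₂ + R₁₃, there exists a 0-symmetric convex body C ⊂ ℝ² such that R({p_i,p_j},C) = R_{ij} for all 1 ≤ i < j ≤ 3. -/
open Pointwise

/-- Circumradius of a symmetric pair with respect to a symmetric convex set,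
given a supporting functional. -/
lemma circ_pair (C : Set (Fin 2 → ℝ)) (p q v : Fin 2 → ℝ) (R u w : ℝ) (hR : 0 < R)
    (hv : q - p = (2 * R) • v) (hvC : v ∈ C) (hvC' : -v ∈ C)
    (hCsym : ∀ z ∈ C, -z ∈ C)
    (hfv : u * v 0 + w * v 1 = 1)
    (hfle : ∀ z ∈ C, u * z 0 + w * z 1 ≤ 1) :
    circumradius {p, q} C = R := by
  have hmem : R ∈ {r : ℝ | 0 ≤ r ∧ ∃ x : Fin 2 → ℝ, x +ᵥ ({p, q} : Set (Fin 2 → ℝ)) ⊆ r • C} := by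
    refine ⟨hR.le, -(R • v) - p, ?_⟩
    intro y hy
    obtain ⟨z, hz, rfl⟩ := hy
    rcases hz with rfl | hz
    · show (-(R • v) - z) +ᵥ z ∈ R • C
      have he : (-(R • v) - z) +ᵥ z = R • (-v) := by
        simp only [vadd_eq_add, smul_neg]; abel
      rw [he]
      exact Set.smul_mem_smul_set hvC'
    · rcases hz with rfl
      show (-(R • v) - p) +ᵥ z ∈ R • C
      have hz2 : z = p + (2 * R) • v := by rw [← hv]; abel
      have he : (-(R • v) - p) +ᵥ z = R • v := by
        rw [hz2, vadd_eq_add, two_mul, add_smul]; abel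
      rw [he]
      exact Set.smul_mem_smul_set hvC
  refine le_antisymm (csInf_le ⟨0, fun r hr => hr.1⟩ hmem) (le_csInf ⟨R, hmem⟩ ?_)
  rintro r ⟨hr0, x, hx⟩
  have hp : x + p ∈ r • C := by
    have := hx (Set.mem_vadd_set.mpr ⟨p, Set.mem_insert p {q}, rfl⟩)
    rwa [vadd_eq_add] at this
  have hq : x + q ∈ r • C := by
    have := hx (Set.mem_vadd_set.mpr ⟨q, Set.mem_insert_of_mem p rfl, rfl⟩)
    rwa [vadd_eq_add] at this
  obtain ⟨zp, hzp, hzpe⟩ := hp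
  obtain ⟨zq, hzq, hzqe⟩ := hq
  set F : (Fin 2 → ℝ) → ℝ := fun z => u * z 0 + w * z 1 with hF
  have hFq : F (x + q) ≤ r := by
    rw [← hzqe]
    have h1 : F (r • zq) = r * F zq := by simp [hF, smul_eq_mul]; ring
    rw [h1]
    calc r * F zq ≤ r * 1 := mul_le_mul_of_nonneg_left (hfle zq hzq) hr0
    _ = r := mul_one r
  have hFp : -r ≤ F (x + p) := by
    rw [← hzpe]
    have h1 : F (r • zp) = r * F zp := by simp [hF, smul_eq_mul]; ring
    have h2 : F (-zp) ≤ 1 := hfle _ (hCsym zp hzp)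
    have h3 : F (-zp) = -F zp := by simp [hF]; ring
    rw [h1]
    nlinarith
  have hdiff : F (x + q) - F (x + p) = 2 * R := by
    have h0 : q 0 - p 0 = 2 * R * v 0 := by
      have := congrFun hv 0; simpa [smul_eq_mul] using this
    have h1 : q 1 - p 1 = 2 * R * v 1 := by
      have := congrFun hv 1; simpa [smul_eq_mul] using this
    have h2 : F (x + q) - F (x + p) = u * (q 0 - p 0) + w * (q 1 - p 1) := by
      simp [hF]; ring
    rw [h2, h0, h1]
    nlinarith [hfv]
  linarith

lemma hull_bound (u w : ℝ) (a b c : Fin 2 → ℝ)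
    (h1 : |u * a 0 + w * a 1| ≤ 1) (h2 : |u * b 0 + w * b 1| ≤ 1)
    (h3 : |u * c 0 + w * c 1| ≤ 1) :
    ∀ z ∈ convexHull ℝ ({a, -a, b, -b, c, -c} : Set (Fin 2 → ℝ)),
      u * z 0 + w * z 1 ≤ 1 := by
  intro z hz
  have hlin : IsLinearMap ℝ (fun z : Fin 2 → ℝ => u * z 0 + w * z 1) := by
    constructor
    · intro x y; simp only [Pi.add_apply]; ring
    · intro t x; simp only [Pi.smul_apply, smul_eq_mul]; ring
  rw [abs_le] at h1 h2 h3
  refine convexHull_min ?_ (convex_halfSpace_le hlin 1) hz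
  rintro y (rfl | rfl | rfl | rfl | rfl | rfl) <;>
    simp only [Set.mem_setOf_eq, Pi.neg_apply, mul_neg] <;> linarith
  all_goals linarith

/-- Sufficiency: given positive reals satisfying the triangle-type inequalities,
there is a `0`-symmetric planar convex body realizing them as the pairwise
circumradii of the vertices of an equilateral triangle. -/
theorem exists_body_realizing_pairs (R12 R13 R23 : ℝ)
    (h13 : 0 < R13) (h23 : 0 < R23) (h1312 : R13 ≤ R12)
    (hlow : R12 - R13 ≤ R23) (hup : R23 ≤ R12 + R13) :
    ∃ C : Set (Fin 2 → ℝ),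
      IsCompact C ∧ Convex ℝ C ∧ (interior C).Nonempty ∧ C = -C ∧
      circumradius {![-(Real.sqrt 3) / 2, -(1 / 2)], ![Real.sqrt 3 / 2, -(1 / 2)]} C = R12 ∧
      circumradius {![-(Real.sqrt 3) / 2, -(1 / 2)], ![0, 1]} C = R13 ∧
      circumradius {![Real.sqrt 3 / 2, -(1 / 2)], ![0, 1]} C = R23 := by
  have h12 : 0 < R12 := lt_of_lt_of_le h13 h1312
  set s := Real.sqrt 3 with hsdef
  have hs0 : 0 < s := Real.sqrt_pos.mpr (by norm_num)
  set a : Fin 2 → ℝ := ![s / (2 * R12), 0] with ha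
  set b : Fin 2 → ℝ := ![s / (4 * R13), 3 / (4 * R13)] with hb
  set c : Fin 2 → ℝ := ![s / (4 * R23), -(3 / (4 * R23))] with hc
  have hv12 : (![Real.sqrt 3 / 2, -(1 / 2)] : Fin 2 → ℝ) - ![-(Real.sqrt 3) / 2, -(1 / 2)]
      = (2 * R12) • a := by
    rw [ha]; funext i; fin_cases i <;> simp <;> field_simp <;> rw [hsdef] <;> ring
  have hv13 : (![0, 1] : Fin 2 → ℝ) - ![-(Real.sqrt 3) / 2, -(1 / 2)] = (2 * R13) • b := by
    rw [hb]; funext i; fin_cases i <;> simp <;> field_simp <;> try ring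
  have hv23 : (![0, 1] : Fin 2 → ℝ) - ![Real.sqrt 3 / 2, -(1 / 2)] = (2 * R23) • (-c) := by
    rw [hc]; funext i; fin_cases i <;> simp <;> field_simp <;> try ring
  set S6 : Set (Fin 2 → ℝ) := {a, -a, b, -b, c, -c} with hS6
  have hfin : S6.Finite := (Set.finite_singleton _).insert _ |>.insert _ |>.insert _
    |>.insert _ |>.insert _
  set C : Set (Fin 2 → ℝ) := convexHull ℝ S6 with hC
  have haC : a ∈ C := subset_convexHull ℝ S6 (by simp [hS6])
  have hnaC : -a ∈ C := subset_convexHull ℝ S6 (by simp [hS6])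
  have hbC : b ∈ C := subset_convexHull ℝ S6 (by simp [hS6])
  have hnbC : -b ∈ C := subset_convexHull ℝ S6 (by simp [hS6])
  have hcC : c ∈ C := subset_convexHull ℝ S6 (by simp [hS6])
  have hncC : -c ∈ C := subset_convexHull ℝ S6 (by simp [hS6])
  have hstep : ∀ z ∈ S6, -z ∈ S6 := by
    intro z hz
    simp only [hS6, Set.mem_insert_iff, Set.mem_singleton_iff] at hz ⊢
    rcases hz with rfl | rfl | rfl | rfl | rfl | rfl <;> simp
  have hsymS : -S6 = S6 := by
    ext z
    simp only [Set.mem_neg]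
    exact ⟨fun h => by simpa using hstep _ h, fun h => hstep _ h⟩
  have hCsymm : C = -C := by rw [hC, ← convexHull_neg, hsymS]
  have hCsym : ∀ z ∈ C, -z ∈ C := by
    intro z hz
    rw [hCsymm]
    exact Set.neg_mem_neg.mpr hz
  have hconv : Convex ℝ C := convex_convexHull ℝ S6
  -- compactness
  have hcomp : IsCompact C := hfin.isCompact_convexHull ℝ
  -- interior nonempty
  have hint : (interior C).Nonempty := by
    rw [hconv.interior_nonempty_iff_affineSpan_eq_top, hC, affineSpan_convexHull]
    rw [AffineSubspace.affineSpan_eq_top_iff_vectorSpan_eq_top_of_nonempty ℝ (Fin 2 → ℝ) (Fin 2 → ℝ) (s := S6) ⟨a, by simp [hS6]⟩]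
    rw [eq_top_iff]
    intro x _
    have h2a : (2 : ℝ) • a ∈ vectorSpan ℝ S6 := by
      have := vsub_mem_vectorSpan ℝ (p₁ := a) (p₂ := -a) (s := S6)
        (by simp [hS6]) (by simp [hS6])
      simpa [vsub_eq_sub, two_smul, sub_neg_eq_add] using this
    have h2b : (2 : ℝ) • b ∈ vectorSpan ℝ S6 := by
      have := vsub_mem_vectorSpan ℝ (p₁ := b) (p₂ := -b) (s := S6)
        (by simp [hS6]) (by simp [hS6])
      simpa [vsub_eq_sub, two_smul, sub_neg_eq_add] using this
    have hxeq : x = ((R12 / s) * (x 0 - (s / (4 * R13)) * ((4 * R13 / 3) * x 1))) • ((2:ℝ) • a)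
        + ((2 * R13 / 3) * x 1) • ((2:ℝ) • b) := by
      funext i
      fin_cases i <;>
        simp [ha, hb, smul_eq_mul] <;>
        field_simp <;> ring
    rw [hxeq]
    exact Submodule.add_mem _ (Submodule.smul_mem _ _ h2a) (Submodule.smul_mem _ _ h2b)
  have ha0 : a 0 = s / (2 * R12) := by rw [ha]; rfl
  have ha1 : a 1 = 0 := by rw [ha]; rfl
  have hb0 : b 0 = s / (4 * R13) := by rw [hb]; rfl
  have hb1 : b 1 = 3 / (4 * R13) := by rw [hb]; rfl
  have hc0 : c 0 = s / (4 * R23) := by rw [hc]; rfl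
  have hc1 : c 1 = -(3 / (4 * R23)) := by rw [hc]; rfl
  have hfa1 : (2 * R12 / s) * a 0 + ((2 * R12 - 4 * R23) / 3) * a 1 = 1 := by
    rw [ha0, ha1]; field_simp; ring
  have hfb1 : (2 * R12 / s) * b 0 + ((2 * R12 - 4 * R23) / 3) * b 1 = (R12 - R23) / R13 := by
    rw [hb0, hb1]; field_simp; try ring
  have hfc1 : (2 * R12 / s) * c 0 + ((2 * R12 - 4 * R23) / 3) * c 1 = 1 := by
    rw [hc0, hc1]; field_simp; try ring
  have hga1 : (2 * R12 / s) * a 0 + ((4 * R13 - 2 * R12) / 3) * a 1 = 1 := by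
    rw [ha0, ha1]; field_simp; ring
  have hgb1 : (2 * R12 / s) * b 0 + ((4 * R13 - 2 * R12) / 3) * b 1 = 1 := by
    rw [hb0, hb1]; field_simp; try ring
  have hgc1 : (2 * R12 / s) * c 0 + ((4 * R13 - 2 * R12) / 3) * c 1 = (R12 - R13) / R23 := by
    rw [hc0, hc1]; field_simp; try ring
  have hbb1 : (R12 - R23) / R13 ≤ 1 := by rw [div_le_one h13]; linarith
  have hbb1' : -1 ≤ (R12 - R23) / R13 := by rw [le_div_iff₀ h13]; linarith
  have hbb2 : (R12 - R13) / R23 ≤ 1 := by rw [div_le_one h23]; linarith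
  have hbb2' : -1 ≤ (R12 - R13) / R23 := by rw [le_div_iff₀ h23]; linarith
  have habs1 : |(2 * R12 / s) * b 0 + ((2 * R12 - 4 * R23) / 3) * b 1| ≤ 1 := by
    rw [hfb1, abs_le]; exact ⟨hbb1', hbb1⟩
  have habs2 : |(2 * R12 / s) * c 0 + ((4 * R13 - 2 * R12) / 3) * c 1| ≤ 1 := by
    rw [hgc1, abs_le]; exact ⟨hbb2', hbb2⟩
  have hgen1 : ∀ z ∈ C, (2 * R12 / s) * z 0 + ((2 * R12 - 4 * R23) / 3) * z 1 ≤ 1 := by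
    rw [hC, hS6]
    exact hull_bound _ _ _ _ _ (by rw [hfa1]; norm_num) habs1 (by rw [hfc1]; norm_num)
  have hgen2 : ∀ z ∈ C, (2 * R12 / s) * z 0 + ((4 * R13 - 2 * R12) / 3) * z 1 ≤ 1 := by
    rw [hC, hS6]
    exact hull_bound _ _ _ _ _ (by rw [hga1]; norm_num) (by rw [hgb1]; norm_num) habs2
  have hgen3 : ∀ z ∈ C, (-(2 * R12 / s)) * z 0 + (-((2 * R12 - 4 * R23) / 3)) * z 1 ≤ 1 := by
    have hneg : ∀ z : Fin 2 → ℝ, (-(2 * R12 / s)) * z 0 + (-((2 * R12 - 4 * R23) / 3)) * z 1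
        = ((2 * R12 / s) * (-z) 0 + ((2 * R12 - 4 * R23) / 3) * (-z) 1) := by
      intro z; simp only [Pi.neg_apply, mul_neg]; ring
    intro z hz
    rw [hneg]
    exact hgen1 (-z) (hCsym z hz)
  refine ⟨C, hcomp, hconv, hint, hCsymm, ?_, ?_, ?_⟩
  · apply circ_pair C _ _ a R12 (2 * R12 / s) ((2 * R12 - 4 * R23) / 3) h12 _ haC hnaC hCsym
      hfa1 hgen1
    exact hv12
  · apply circ_pair C _ _ b R13 (2 * R12 / s) ((4 * R13 - 2 * R12) / 3) h13 _ hbC hnbC hCsym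
      hgb1 hgen2
    funext i
    fin_cases i <;>
      simp only [Pi.sub_apply, Pi.smul_apply, smul_eq_mul, hb0, hb1, hb, Fin.zero_eta, Fin.mk_one,
        Matrix.cons_val_zero, Matrix.cons_val_one, Matrix.head_cons] <;>
      field_simp <;> ring
  · have hfnc : (-(2 * R12 / s)) * (-c) 0 + (-((2 * R12 - 4 * R23) / 3)) * (-c) 1 = 1 := by
      simp only [Pi.neg_apply, mul_neg, neg_mul, neg_neg]
      linarith [hfc1]
    apply circ_pair C _ _ (-c) R23 (-(2 * R12 / s)) (-((2 * R12 - 4 * R23) / 3)) h23 _ hncC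
      (by rwa [neg_neg]) hCsym hfnc hgen3
    funext i
    fin_cases i <;>
      simp only [Pi.sub_apply, Pi.smul_apply, Pi.neg_apply, smul_eq_mul, hc0, hc1, hc,
        Fin.zero_eta, Fin.mk_one, Matrix.cons_val_zero, Matrix.cons_val_one, Matrix.head_cons] <;>
      field_simp <;> ring
end

section
/- Let S be the equilateral triangle with vertices p₁ = (−√3/2, −1/2), p₂ = (√3/2, −1/2), p₃ = (0,1), let C ⊂ ℝ² be a 0-symmetric convex body, set R_{ij} := R({p_i,p_j},C) and R₁₂₃ := R(S,C), and assume 0 < R₁₃ ≤ R₁₂. Then max{R₁₂,R₁₃,R₂₃} ≤ R₁₂₃ ≤ 8R₁₂R₁₃R₂₃ / (√3·(2R₁₂R₁₃ + 2R₁₂R₂₃ + 2R₁₃R₂₃ − R₁₂² − R₁₃² − R₂₃²)). -/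
open Pointwise

private lemma mem_smul_of_gauge_lt' {E : Type*} [AddCommGroup E] [Module ℝ E]
    {C : Set E} (hconv : Convex ℝ C) (h0 : (0:E) ∈ C)
    (habs : Absorbent ℝ C) {v : E} {r : ℝ} (h : gauge C v < r) : v ∈ r • C := by
  obtain ⟨t, ht0, htr, w, hw, rfl⟩ := exists_lt_of_gauge_lt habs h
  have hr0 : 0 < r := ht0.trans htr
  have hmem : (t / r) • w ∈ C :=
    hconv.smul_mem_of_zero_mem h0 hw ⟨by positivity, by rw [div_le_one hr0]; exact htr.le⟩
  refine ⟨(t / r) • w, hmem, ?_⟩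
  simp only []
  show r • (t / r) • w = t • w
  rw [smul_smul, mul_div_cancel₀ _ hr0.ne']

section Pair

variable {n : ℕ} {C : Set (Fin n → ℝ)}

private lemma circumradius_pair (hconv : Convex ℝ C) (h0 : (0 : Fin n → ℝ) ∈ C)
    (habs : Absorbent ℝ C) (hsymm : ∀ x ∈ C, -x ∈ C) (p q : Fin n → ℝ) :
    circumradius {p, q} C = gauge C (p - q) / 2 := by
  have hmemset : ∀ ε : ℝ, 0 < ε →
      gauge C (p - q) / 2 + ε ∈ {r : ℝ | 0 ≤ r ∧ ∃ x : Fin n → ℝ, x +ᵥ ({p, q} : Set (Fin n → ℝ)) ⊆ r • C} := by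
    intro ε hε
    have hg0 := gauge_nonneg (s := C) (p - q)
    refine ⟨by positivity, -((2⁻¹ : ℝ) • (p + q)), ?_⟩
    rintro y ⟨z, hz, rfl⟩
    have hhalf : gauge C ((2⁻¹ : ℝ) • (p - q)) = 2⁻¹ * gauge C (p - q) := by
      rw [gauge_smul_of_nonneg (by norm_num), smul_eq_mul]
    rcases hz with rfl | rfl
    · have hv : -((2⁻¹ : ℝ) • (z + q)) +ᵥ z = (2⁻¹ : ℝ) • (z - q) := by
        rw [vadd_eq_add]; module
      show -((2⁻¹ : ℝ) • (z + q)) +ᵥ z ∈ _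
      rw [hv]
      exact mem_smul_of_gauge_lt' hconv h0 habs (by rw [hhalf]; linarith)
    · have hv : -((2⁻¹ : ℝ) • (p + z)) +ᵥ z = -((2⁻¹ : ℝ) • (p - z)) := by
        rw [vadd_eq_add]; module
      show -((2⁻¹ : ℝ) • (p + z)) +ᵥ z ∈ _
      rw [hv]
      refine mem_smul_of_gauge_lt' hconv h0 habs ?_
      rw [gauge_neg hsymm, hhalf]; linarith
  have hbdd : BddBelow {r : ℝ | 0 ≤ r ∧ ∃ x : Fin n → ℝ, x +ᵥ ({p, q} : Set (Fin n → ℝ)) ⊆ r • C} :=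
    ⟨0, fun r hr => hr.1⟩
  refine le_antisymm ?_ ?_
  · refine le_of_forall_pos_lt_add fun ε hε => ?_
    calc circumradius {p, q} C ≤ gauge C (p - q) / 2 + ε / 2 :=
          csInf_le hbdd (hmemset _ (by positivity))
      _ < gauge C (p - q) / 2 + ε := by linarith
  · refine le_csInf ⟨_, hmemset 1 one_pos⟩ ?_
    rintro r ⟨hr0, x, hx⟩
    have h1 : x + p ∈ r • C := hx ⟨p, by simp, rfl⟩
    have h2 : x + q ∈ r • C := hx ⟨q, by simp, rfl⟩
    have g1 : gauge C (x + p) ≤ r := gauge_le_of_mem hr0 h1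
    have g2 : gauge C (-(x + q)) ≤ r := by rw [gauge_neg hsymm]; exact gauge_le_of_mem hr0 h2
    have hadd := gauge_add_le hconv habs (x + p) (-(x + q))
    have hxpq : x + p + -(x + q) = p - q := by abel
    rw [hxpq] at hadd
    linarith
end Pair

private lemma key_ineq (R12 R13 R23 : ℝ) (h12 : 0 < R12) (h13 : 0 < R13) (h23 : 0 < R23)
    (t1 : R12 ≤ R13 + R23) (t2 : R13 ≤ R12 + R23) (t3 : R23 ≤ R12 + R13) :
    ∃ l1 l2 l3 : ℝ, 0 ≤ l1 ∧ 0 ≤ l2 ∧ 0 ≤ l3 ∧ l1 + l2 + l3 = 1 ∧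
      max (l2 * (2 * R12) + l3 * (2 * R13))
        (max (l1 * (2 * R12) + l3 * (2 * R23)) (l1 * (2 * R13) + l2 * (2 * R23)))
        ≤ 8 * R12 * R13 * R23 /
          (Real.sqrt 3 * (2 * R12 * R13 + 2 * R12 * R23 + 2 * R13 * R23
            - R12 ^ 2 - R13 ^ 2 - R23 ^ 2)) := by
  set Dr : ℝ := 2 * R12 * R13 + 2 * R12 * R23 + 2 * R13 * R23 - R12 ^ 2 - R13 ^ 2 - R23 ^ 2
    with hDrdef
  have hDr : 0 < Dr := by
    rcases eq_or_lt_of_le t1 with h | h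
    · nlinarith
    · nlinarith [mul_pos h13 h23, mul_nonneg h23.le (sub_nonneg.2 t3),
        mul_nonneg h13.le (sub_nonneg.2 t2)]
  have hs3 : (0:ℝ) < Real.sqrt 3 := Real.sqrt_pos.mpr (by norm_num)
  have hs32 : Real.sqrt 3 ≤ 2 := by
    nlinarith [Real.sq_sqrt (by norm_num : (0:ℝ) ≤ 3), Real.sqrt_nonneg 3]
  have hP : 0 < R12 * R13 * R23 := by positivity
  refine ⟨R23 * (R12 + R13 - R23) / Dr, R13 * (R12 + R23 - R13) / Dr,
    R12 * (R13 + R23 - R12) / Dr, ?_, ?_, ?_, ?_, ?_⟩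
  · exact div_nonneg (mul_nonneg h23.le (by linarith)) hDr.le
  · exact div_nonneg (mul_nonneg h13.le (by linarith)) hDr.le
  · exact div_nonneg (mul_nonneg h12.le (by linarith)) hDr.le
  · field_simp
    ring
  · have hbound : (4 : ℝ) * (R12 * R13 * R23) / Dr ≤ 8 * R12 * R13 * R23 / (Real.sqrt 3 * Dr) := by
      rw [div_le_div_iff₀ hDr (by positivity)]
      nlinarith [mul_pos hP hDr]
    have e1 : R13 * (R12 + R23 - R13) / Dr * (2 * R12) + R12 * (R13 + R23 - R12) / Dr * (2 * R13)
        = 4 * (R12 * R13 * R23) / Dr := by field_simp; ring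
    have e2 : R23 * (R12 + R13 - R23) / Dr * (2 * R12) + R12 * (R13 + R23 - R12) / Dr * (2 * R23)
        = 4 * (R12 * R13 * R23) / Dr := by field_simp; ring
    have e3 : R23 * (R12 + R13 - R23) / Dr * (2 * R13) + R13 * (R12 + R23 - R13) / Dr * (2 * R23)
        = 4 * (R12 * R13 * R23) / Dr := by field_simp; ring
    rw [e1, e2, e3, max_self, max_self]
    exact hbound

/-- Bounds for the circumradius of the equilateral triangle in terms of the
pairwise circumradii of its vertices, w.r.t. a `0`-symmetric planar convex body. -/
theorem circumradius_triangle_bounds (C : Set (Fin 2 → ℝ))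
    (hC : IsCompact C) (hconv : Convex ℝ C) (hint : (interior C).Nonempty)
    (hsym : C = -C)
    (p₁ p₂ p₃ : Fin 2 → ℝ)
    (hp₁ : p₁ = ![-(Real.sqrt 3) / 2, -(1 / 2)]) (hp₂ : p₂ = ![Real.sqrt 3 / 2, -(1 / 2)])
    (hp₃ : p₃ = ![0, 1])
    (R12 R13 R23 R123 : ℝ)
    (hR12 : R12 = circumradius {p₁, p₂} C) (hR13 : R13 = circumradius {p₁, p₃} C)
    (hR23 : R23 = circumradius {p₂, p₃} C)
    (hR123 : R123 = circumradius (convexHull ℝ {p₁, p₂, p₃}) C)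
    (hpos : 0 < R13) (hord : R13 ≤ R12) :
    max R12 (max R13 R23) ≤ R123 ∧
    R123 ≤ 8 * R12 * R13 * R23 /
      (Real.sqrt 3 * (2 * R12 * R13 + 2 * R12 * R23 + 2 * R13 * R23
        - R12 ^ 2 - R13 ^ 2 - R23 ^ 2)) := by
  -- symmetry of C
  have hsymm : ∀ x ∈ C, -x ∈ C := fun x hx => Set.mem_neg.mp (hsym ▸ hx)
  -- `0` is in the interior of `C`
  have hC0 : (0 : Fin 2 → ℝ) ∈ interior C := by
    obtain ⟨y, hy⟩ := hint
    have hyneg : -y ∈ interior C := by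
      have h1 : y ∈ interior (-C) := by rw [← hsym]; exact hy
      have h2 : interior (-C) = -(interior C) := by
        have := (Homeomorph.neg (Fin 2 → ℝ)).preimage_interior C
        exact this.symm
      rw [h2] at h1
      exact Set.mem_neg.mp h1
    have h0 : (0 : Fin 2 → ℝ) = (2⁻¹ : ℝ) • y + (2⁻¹ : ℝ) • (-y) := by module
    rw [h0]
    exact hconv.interior hy hyneg (by norm_num) (by norm_num) (by norm_num)
  have h0C : (0 : Fin 2 → ℝ) ∈ C := interior_subset hC0
  have habs : Absorbent ℝ C := absorbent_nhds_zero (mem_interior_iff_mem_nhds.mp hC0)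
  have hbnd : Bornology.IsVonNBounded ℝ C :=
    NormedSpace.isVonNBounded_of_isBounded _ hC.isBounded
  -- pairwise circumradii are half-gauges of the differences
  have ha : R12 = gauge C (p₁ - p₂) / 2 := hR12.trans (circumradius_pair hconv h0C habs hsymm p₁ p₂)
  have hb : R13 = gauge C (p₁ - p₃) / 2 := hR13.trans (circumradius_pair hconv h0C habs hsymm p₁ p₃)
  have hc : R23 = gauge C (p₂ - p₃) / 2 := hR23.trans (circumradius_pair hconv h0C habs hsymm p₂ p₃)
  have hga : gauge C (p₁ - p₂) = 2 * R12 := by rw [ha]; ring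
  have hgb : gauge C (p₁ - p₃) = 2 * R13 := by rw [hb]; ring
  have hgc : gauge C (p₂ - p₃) = 2 * R23 := by rw [hc]; ring
  -- positivity of R23
  have hne23 : p₂ - p₃ ≠ 0 := by
    rw [hp₂, hp₃]
    intro h
    have := congrFun h 1
    norm_num [Matrix.cons_val_one, Matrix.head_cons] at this
  have hc_pos : 0 < R23 := by
    have := (gauge_pos habs hbnd).mpr hne23
    rw [hgc] at this; linarith
  have h12 : 0 < R12 := lt_of_lt_of_le hpos hord
  -- triangle inequalities
  have hgneg : ∀ v : Fin 2 → ℝ, gauge C (-v) = gauge C v := gauge_neg hsymm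
  have triangle : ∀ u v : Fin 2 → ℝ, gauge C (u + v) ≤ gauge C u + gauge C v :=
    gauge_add_le hconv habs
  have t1 : R12 ≤ R13 + R23 := by
    have h := triangle (p₁ - p₃) (p₃ - p₂)
    rw [show p₁ - p₃ + (p₃ - p₂) = p₁ - p₂ by abel,
      show p₃ - p₂ = -(p₂ - p₃) by abel, hgneg, hga, hgb, hgc] at h
    linarith
  have t2 : R13 ≤ R12 + R23 := by
    have h := triangle (p₁ - p₂) (p₂ - p₃)
    rw [show p₁ - p₂ + (p₂ - p₃) = p₁ - p₃ by abel, hga, hgb, hgc] at h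
    linarith
  have t3 : R23 ≤ R12 + R13 := by
    have h := triangle (p₂ - p₁) (p₁ - p₃)
    rw [show p₂ - p₁ + (p₁ - p₃) = p₂ - p₃ by abel,
      show p₂ - p₁ = -(p₁ - p₂) by abel, hgneg, hga, hgb, hgc] at h
    linarith
  -- membership tool for the triangle set
  have tri_mem : ∀ (x : Fin 2 → ℝ) (r : ℝ), 0 ≤ r →
      gauge C (x + p₁) < r → gauge C (x + p₂) < r → gauge C (x + p₃) < r →
      r ∈ {r : ℝ | 0 ≤ r ∧ ∃ x : Fin 2 → ℝ,
        x +ᵥ (convexHull ℝ {p₁, p₂, p₃} : Set (Fin 2 → ℝ)) ⊆ r • C} := by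
    intro x r hr h1 h2 h3
    refine ⟨hr, x, ?_⟩
    rw [← convexHull_vadd]
    refine convexHull_min ?_ (hconv.smul r)
    rintro y ⟨z, hz, rfl⟩
    show x +ᵥ z ∈ r • C
    rw [vadd_eq_add]
    rcases hz with rfl | rfl | rfl
    exacts [mem_smul_of_gauge_lt' hconv h0C habs h1,
      mem_smul_of_gauge_lt' hconv h0C habs h2,
      mem_smul_of_gauge_lt' hconv h0C habs h3]
  -- the triangle set is nonempty
  set M : ℝ := max (gauge C p₁) (max (gauge C p₂) (gauge C p₃)) + 1 with hM
  have hg1 := gauge_nonneg (s := C) p₁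
  have hle1 : gauge C p₁ ≤ M - 1 := by rw [hM]; simp [le_max_iff]
  have hle2 : gauge C p₂ ≤ M - 1 := by rw [hM]; simp [le_max_iff]
  have hle3 : gauge C p₃ ≤ M - 1 := by rw [hM]; simp [le_max_iff]
  have hMmem : M ∈ {r : ℝ | 0 ≤ r ∧ ∃ x : Fin 2 → ℝ,
      x +ᵥ (convexHull ℝ {p₁, p₂, p₃} : Set (Fin 2 → ℝ)) ⊆ r • C} := by
    refine tri_mem 0 M (by linarith) ?_ ?_ ?_ <;> rw [zero_add] <;> linarith
  have hbddtri : BddBelow {r : ℝ | 0 ≤ r ∧ ∃ x : Fin 2 → ℝ,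
      x +ᵥ (convexHull ℝ {p₁, p₂, p₃} : Set (Fin 2 → ℝ)) ⊆ r • C} := ⟨0, fun r hr => hr.1⟩
  -- lower bound: monotonicity
  have hlow : ∀ X : Set (Fin 2 → ℝ), X ⊆ convexHull ℝ {p₁, p₂, p₃} →
      circumradius X C ≤ R123 := by
    intro X hX
    rw [hR123]
    refine csInf_le_csInf ⟨0, fun r hr => hr.1⟩ ⟨M, hMmem⟩ ?_
    rintro r ⟨hr0, x, hx⟩
    exact ⟨hr0, x, Set.Subset.trans (Set.vadd_set_mono hX) hx⟩
  have hmem3 : ∀ z ∈ ({p₁, p₂, p₃} : Set (Fin 2 → ℝ)), z ∈ convexHull ℝ {p₁, p₂, p₃} :=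
    fun z hz => subset_convexHull ℝ _ hz
  have low12 : R12 ≤ R123 := by
    rw [hR12]
    refine hlow _ fun z hz => hmem3 z ?_
    rcases hz with rfl | rfl
    · exact Set.mem_insert _ _
    · exact Set.mem_insert_of_mem _ (Set.mem_insert _ _)
  have low13 : R13 ≤ R123 := by
    rw [hR13]
    refine hlow _ fun z hz => hmem3 z ?_
    rcases hz with rfl | rfl
    · exact Set.mem_insert _ _
    · exact Set.mem_insert_of_mem _ (Set.mem_insert_of_mem _ rfl)
  have low23 : R23 ≤ R123 := by
    rw [hR23]
    refine hlow _ fun z hz => hmem3 z ?_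
    rcases hz with rfl | rfl
    · exact Set.mem_insert_of_mem _ (Set.mem_insert _ _)
    · exact Set.mem_insert_of_mem _ (Set.mem_insert_of_mem _ rfl)
  refine ⟨max_le low12 (max_le low13 low23), ?_⟩
  -- upper bound
  obtain ⟨l1, l2, l3, hl1, hl2, hl3, hsum, hkey⟩ :=
    key_ineq R12 R13 R23 h12 hpos hc_pos t1 t2 t3
  set B : ℝ := 8 * R12 * R13 * R23 /
      (Real.sqrt 3 * (2 * R12 * R13 + 2 * R12 * R23 + 2 * R13 * R23
        - R12 ^ 2 - R13 ^ 2 - R23 ^ 2)) with hB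
  set x₀ : Fin 2 → ℝ := -(l1 • p₁ + l2 • p₂ + l3 • p₃) with hx₀
  have hl1eq : l1 = 1 - l2 - l3 := by linarith
  have hxp1 : x₀ + p₁ = l2 • (p₁ - p₂) + l3 • (p₁ - p₃) := by
    rw [hx₀, hl1eq]; module
  have hxp2 : x₀ + p₂ = l1 • (-(p₁ - p₂)) + l3 • (p₂ - p₃) := by
    have hl2eq : l2 = 1 - l1 - l3 := by linarith
    rw [hx₀, hl2eq]; module
  have hxp3 : x₀ + p₃ = l1 • (-(p₁ - p₃)) + l2 • (-(p₂ - p₃)) := by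
    have hl3eq : l3 = 1 - l1 - l2 := by linarith
    rw [hx₀, hl3eq]; module
  have hsmul : ∀ (t : ℝ) (v : Fin 2 → ℝ), 0 ≤ t → gauge C (t • v) = t * gauge C v := by
    intro t v ht
    rw [gauge_smul_of_nonneg ht, smul_eq_mul]
  have g1 : gauge C (x₀ + p₁) ≤ l2 * (2 * R12) + l3 * (2 * R13) := by
    rw [hxp1]
    calc gauge C (l2 • (p₁ - p₂) + l3 • (p₁ - p₃))
        ≤ gauge C (l2 • (p₁ - p₂)) + gauge C (l3 • (p₁ - p₃)) := triangle _ _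
      _ = l2 * (2 * R12) + l3 * (2 * R13) := by
          rw [hsmul _ _ hl2, hsmul _ _ hl3, hga, hgb]
  have g2 : gauge C (x₀ + p₂) ≤ l1 * (2 * R12) + l3 * (2 * R23) := by
    rw [hxp2]
    calc gauge C (l1 • (-(p₁ - p₂)) + l3 • (p₂ - p₃))
        ≤ gauge C (l1 • (-(p₁ - p₂))) + gauge C (l3 • (p₂ - p₃)) := triangle _ _
      _ = l1 * (2 * R12) + l3 * (2 * R23) := by
          rw [hsmul _ _ hl1, hsmul _ _ hl3, hgneg, hga, hgc]
  have g3 : gauge C (x₀ + p₃) ≤ l1 * (2 * R13) + l2 * (2 * R23) := by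
    rw [hxp3]
    calc gauge C (l1 • (-(p₁ - p₃)) + l2 • (-(p₂ - p₃)))
        ≤ gauge C (l1 • (-(p₁ - p₃))) + gauge C (l2 • (-(p₂ - p₃))) := triangle _ _
      _ = l1 * (2 * R13) + l2 * (2 * R23) := by
          rw [hsmul _ _ hl1, hsmul _ _ hl2, hgneg, hgneg, hgb, hgc]
  have gB1 : gauge C (x₀ + p₁) ≤ B := le_trans g1 (le_trans (le_max_left _ _) hkey)
  have gB2 : gauge C (x₀ + p₂) ≤ B :=
    le_trans g2 (le_trans (le_trans (le_max_left _ _) (le_max_right _ _)) hkey)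
  have gB3 : gauge C (x₀ + p₃) ≤ B :=
    le_trans g3 (le_trans (le_trans (le_max_right _ _) (le_max_right _ _)) hkey)
  have hB0 : 0 ≤ B := le_trans (gauge_nonneg _) gB1
  rw [hR123]
  refine le_of_forall_pos_lt_add fun ε hε => ?_
  calc circumradius (convexHull ℝ {p₁, p₂, p₃}) C ≤ B + ε / 2 :=
        csInf_le hbddtri (tri_mem x₀ (B + ε / 2) (by linarith)
          (by linarith) (by linarith) (by linarith))
    _ < B + ε := by linarith
end

section
/- Let S = conv({p₁,p₂,p₃}) ⊂ ℝⁿ be a nondegenerate triangle, C ⊂ ℝⁿ a 0-symmetric convex body, and set R_{ij} := R({p_i,p_j},C), R₁₂₃ := R(S,C). If 0 < R₁₃ ≤ R₁₂, then R₁₂ − R₁₃ ≤ R₂₃ ≤ R₁₂ + R₁₃, max{R₁₂,R₁₃,R₂₃} ≤ R₁₂₃, and √3·(2R₁₂R₁₃ + 2R₁₂R₂₃ + 2R₁₃R₂₃ − R₁₂² − R₁₃² − R₂₃²)·R₁₂₃ ≤ 8R₁₂R₁₃R₂₃. -/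
open Pointwise

section Aux

variable {n : ℕ} {C : Set (Fin n → ℝ)}

/-- Basic structural facts about a symmetric convex body. -/
lemma aux_zero_mem_interior (hconv : Convex ℝ C) (hint : (interior C).Nonempty)
    (hsym : C = -C) : (0 : Fin n → ℝ) ∈ interior C := by
  obtain ⟨y, hy⟩ := hint
  have hneg : -C = (-1 : ℝ) • C := by
    ext x
    constructor
    · intro hx
      rw [Set.mem_neg] at hx
      exact ⟨-x, hx, by simp⟩
    · rintro ⟨z, hz, rfl⟩
      rw [Set.mem_neg]
      simpa using hz
  have hy' : -y ∈ interior C := by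
    rw [hsym, hneg, interior_smul₀ (by norm_num : (-1:ℝ) ≠ 0)]
    exact ⟨y, hy, by simp⟩
  have h2 := hconv.interior hy hy' (by norm_num : (0:ℝ) ≤ 2⁻¹) (by norm_num : (0:ℝ) ≤ 2⁻¹)
    (by norm_num)
  have h0 : (2⁻¹ : ℝ) • y + (2⁻¹ : ℝ) • (-y) = 0 := by module
  rwa [h0] at h2

lemma aux_mem_smul_iff (hC : IsCompact C) (hconv : Convex ℝ C)
    (hnhds : C ∈ nhds (0 : Fin n → ℝ)) {r : ℝ} (hr : 0 < r) (x : Fin n → ℝ) :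
    x ∈ r • C ↔ gauge C x ≤ r := by
  constructor
  · intro hx
    exact gauge_le_of_mem hr.le hx
  · intro hx
    have h1 : gauge C (r⁻¹ • x) ≤ 1 := by
      rw [gauge_smul_of_nonneg (by positivity : (0:ℝ) ≤ r⁻¹)]
      rw [smul_eq_mul, inv_mul_le_iff₀ hr, mul_one]
      exact hx
    have h2 : r⁻¹ • x ∈ closure C := (gauge_le_one_iff_mem_closure hconv hnhds).mp h1
    rw [hC.isClosed.closure_eq] at h2
    exact ⟨r⁻¹ • x, h2, by simp [smul_smul, mul_inv_cancel₀ hr.ne']⟩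

/-- The circumradius of a two-point set equals half the gauge distance. -/
lemma aux_circumradius_pair (hC : IsCompact C) (hconv : Convex ℝ C)
    (hnhds : C ∈ nhds (0 : Fin n → ℝ)) (hsymm : ∀ x ∈ C, -x ∈ C)
    {p q : Fin n → ℝ} (hpq : gauge C (p - q) ≠ 0) :
    circumradius {p, q} C = gauge C (p - q) / 2 := by
  have habs : Absorbent ℝ C := absorbent_nhds_zero hnhds
  have hd : 0 < gauge C (p - q) := lt_of_le_of_ne (gauge_nonneg _) (Ne.symm hpq)
  have hset : {r : ℝ | 0 ≤ r ∧ ∃ x : Fin n → ℝ, x +ᵥ ({p, q} : Set (Fin n → ℝ)) ⊆ r • C}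
      = Set.Ici (gauge C (p - q) / 2) := by
    ext r
    simp only [Set.mem_setOf_eq, Set.mem_Ici]
    constructor
    · rintro ⟨hr0, x, hx⟩
      have hp : x + p ∈ r • C := hx ⟨p, by simp, rfl⟩
      have hq : x + q ∈ r • C := hx ⟨q, by simp, rfl⟩
      have h1 : gauge C (x + p) ≤ r := gauge_le_of_mem hr0 hp
      have h2 : gauge C (x + q) ≤ r := gauge_le_of_mem hr0 hq
      have h3 : gauge C (p - q) ≤ gauge C (x + p) + gauge C (-(x + q)) := by
        have := gauge_add_le hconv habs (x + p) (-(x + q))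
        have he : (x + p) + (-(x + q)) = p - q := by abel
        rwa [he] at this
      rw [gauge_neg hsymm] at h3
      linarith
    · intro hr
      have hrpos : 0 < r := lt_of_lt_of_le (by positivity) hr
      refine ⟨hrpos.le, (-(2⁻¹ : ℝ)) • (p + q), ?_⟩
      rintro y ⟨z, hz, rfl⟩
      have hmem : ∀ w : Fin n → ℝ, gauge C w ≤ r → w ∈ r • C := fun w hw =>
        (aux_mem_smul_iff hC hconv hnhds hrpos w).mpr hw
      simp only [Set.mem_insert_iff, Set.mem_singleton_iff] at hz
      rcases hz with hz | hz
      · rw [hz]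
        apply hmem
        show gauge C ((-(2⁻¹ : ℝ)) • (p + q) +ᵥ p) ≤ r
        have he : (-(2⁻¹ : ℝ)) • (p + q) +ᵥ p = (2⁻¹ : ℝ) • (p - q) := by
          simp only [vadd_eq_add]
          module
        rw [he, gauge_smul_of_nonneg (by norm_num : (0:ℝ) ≤ (2⁻¹:ℝ))]
        rw [smul_eq_mul]
        linarith
      · rw [hz]
        apply hmem
        show gauge C ((-(2⁻¹ : ℝ)) • (p + q) +ᵥ q) ≤ r
        have he : (-(2⁻¹ : ℝ)) • (p + q) +ᵥ q = -((2⁻¹ : ℝ) • (p - q)) := by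
          simp only [vadd_eq_add]
          module
        rw [he, gauge_neg hsymm, gauge_smul_of_nonneg (by norm_num : (0:ℝ) ≤ (2⁻¹:ℝ))]
        rw [smul_eq_mul]
        linarith
  rw [circumradius, hset, csInf_Ici]

end Aux

set_option maxHeartbeats 1000000 in
/-- For a nondegenerate triangle in `ℝⁿ` and a `0`-symmetric convex body `C`,
the pairwise circumradii and the circumradius of the triangle satisfy the two
triangle-type inequalities and the upper bound for `R₁₂₃`. -/
theorem circumradius_triangle_bounds_higher_dim {n : ℕ} (C : Set (Fin n → ℝ))
    (hC : IsCompact C) (hconv : Convex ℝ C) (hint : (interior C).Nonempty)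
    (hsym : C = -C)
    (p₁ p₂ p₃ : Fin n → ℝ) (hindep : AffineIndependent ℝ ![p₁, p₂, p₃])
    (R12 R13 R23 R123 : ℝ)
    (hR12 : R12 = circumradius {p₁, p₂} C) (hR13 : R13 = circumradius {p₁, p₃} C)
    (hR23 : R23 = circumradius {p₂, p₃} C)
    (hR123 : R123 = circumradius (convexHull ℝ {p₁, p₂, p₃}) C)
    (hpos : 0 < R13) (hord : R13 ≤ R12) :
    (R12 - R13 ≤ R23 ∧ R23 ≤ R12 + R13) ∧
    max R12 (max R13 R23) ≤ R123 ∧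
    Real.sqrt 3 * (2 * R12 * R13 + 2 * R12 * R23 + 2 * R13 * R23
      - R12 ^ 2 - R13 ^ 2 - R23 ^ 2) * R123 ≤ 8 * R12 * R13 * R23 := by
  -- Setup: gauge facts
  have h0int : (0 : Fin n → ℝ) ∈ interior C := aux_zero_mem_interior hconv hint hsym
  have hnhds : C ∈ nhds (0 : Fin n → ℝ) := mem_interior_iff_mem_nhds.mp h0int
  have habs : Absorbent ℝ C := absorbent_nhds_zero hnhds
  have hsymm : ∀ x ∈ C, -x ∈ C := by
    intro x hx
    rw [hsym] at hx
    exact Set.mem_neg.mp hx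
  have hbdd : Bornology.IsVonNBounded ℝ C := NormedSpace.isVonNBounded_iff ℝ |>.mpr hC.isBounded
  have hgpos : ∀ x : Fin n → ℝ, x ≠ 0 → 0 < gauge C x := fun x hx =>
    (gauge_pos habs hbdd).mpr hx
  -- distinctness
  have hinj := hindep.injective
  have hne12 : p₁ ≠ p₂ := by
    intro h
    have : (0 : Fin 3) = 1 := hinj (by simpa using h)
    exact absurd this (by decide)
  have hne13 : p₁ ≠ p₃ := by
    intro h
    have : (0 : Fin 3) = 2 := hinj (by simpa using h)
    exact absurd this (by decide)
  have hne23 : p₂ ≠ p₃ := by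
    intro h
    have : (1 : Fin 3) = 2 := hinj (by simpa using h)
    exact absurd this (by decide)
  -- side lengths
  set a := gauge C (p₂ - p₃) with ha_def
  set b := gauge C (p₁ - p₃) with hb_def
  set c := gauge C (p₁ - p₂) with hc_def
  have ha : 0 < a := hgpos _ (sub_ne_zero.mpr hne23)
  have hb : 0 < b := hgpos _ (sub_ne_zero.mpr hne13)
  have hc : 0 < c := hgpos _ (sub_ne_zero.mpr hne12)
  have hR12' : R12 = c / 2 := by
    rw [hR12, aux_circumradius_pair hC hconv hnhds hsymm hc.ne']
  have hR13' : R13 = b / 2 := by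
    rw [hR13, aux_circumradius_pair hC hconv hnhds hsymm hb.ne']
  have hR23' : R23 = a / 2 := by
    rw [hR23, aux_circumradius_pair hC hconv hnhds hsymm ha.ne']
  -- triangle inequalities for the gauge
  have gauge_tri : ∀ x y : Fin n → ℝ, gauge C (x + y) ≤ gauge C x + gauge C y :=
    gauge_add_le hconv habs
  have gneg : ∀ x : Fin n → ℝ, gauge C (-x) = gauge C x := gauge_neg hsymm
  have htri_a : a ≤ b + c := by
    have h := gauge_tri (-(p₁ - p₂)) (p₁ - p₃)
    have he : -(p₁ - p₂) + (p₁ - p₃) = p₂ - p₃ := by abel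
    rw [he, gneg] at h
    rw [ha_def, hb_def, hc_def]; linarith
  have htri_b : b ≤ a + c := by
    have h := gauge_tri (p₁ - p₂) (p₂ - p₃)
    have he : (p₁ - p₂) + (p₂ - p₃) = p₁ - p₃ := by abel
    rw [he] at h
    rw [ha_def, hb_def, hc_def]; linarith
  have htri_c : c ≤ a + b := by
    have h := gauge_tri (p₁ - p₃) (-(p₂ - p₃))
    have he : (p₁ - p₃) + -(p₂ - p₃) = p₁ - p₂ := by abel
    rw [he, gneg] at h
    rw [ha_def, hb_def, hc_def]; linarith
  -- feasible sets
  set F : Set (Fin n → ℝ) → Set ℝ :=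
    fun X => {r : ℝ | 0 ≤ r ∧ ∃ x : Fin n → ℝ, x +ᵥ X ⊆ r • C} with hF_def
  have hFbdd : ∀ X, BddBelow (F X) := fun X => ⟨0, fun r hr => hr.1⟩
  have hmem : ∀ r : ℝ, 0 < r → ∀ w : Fin n → ℝ, gauge C w ≤ r → w ∈ r • C := fun r hr w hw =>
    (aux_mem_smul_iff hC hconv hnhds hr w).mpr hw
  -- a sufficient condition for membership in F (convexHull {p₁,p₂,p₃})
  have hfeas : ∀ r : ℝ, 0 < r → ∀ x : Fin n → ℝ,
      gauge C (x + p₁) ≤ r → gauge C (x + p₂) ≤ r → gauge C (x + p₃) ≤ r →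
      r ∈ F (convexHull ℝ {p₁, p₂, p₃}) := by
    intro r hr x h1 h2 h3
    refine ⟨hr.le, x, ?_⟩
    rintro y ⟨z, hz, rfl⟩
    simp only [vadd_eq_add]
    have hDconv : Convex ℝ ((fun w => x + w) ⁻¹' (r • C)) :=
      (hconv.smul r).translate_preimage_right x
    have hsub : ({p₁, p₂, p₃} : Set (Fin n → ℝ)) ⊆ (fun w => x + w) ⁻¹' (r • C) := by
      rintro q (rfl | rfl | rfl)
      · exact hmem r hr _ h1
      · exact hmem r hr _ h2
      · exact hmem r hr _ h3
    exact convexHull_min hsub hDconv hz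
  -- part 2: max bound
  have hFne : (F (convexHull ℝ {p₁, p₂, p₃})).Nonempty := by
    refine ⟨b + c + 1, hfeas _ (by positivity) (-p₁) ?_ ?_ ?_⟩
    · simp only [neg_add_cancel, gauge_zero]; positivity
    · have he : -p₁ + p₂ = -(p₁ - p₂) := by abel
      rw [he, gneg, ← hc_def]; linarith
    · have he : -p₁ + p₃ = -(p₁ - p₃) := by abel
      rw [he, gneg, ← hb_def]; linarith
  have hmono : ∀ p q : Fin n → ℝ, ({p, q} : Set (Fin n → ℝ)) ⊆ ({p₁, p₂, p₃} : Set (Fin n → ℝ)) →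
      circumradius {p, q} C ≤ R123 := by
    intro p q hpq
    rw [hR123]
    apply csInf_le_csInf (hFbdd _) hFne
    rintro r ⟨hr0, x, hx⟩
    refine ⟨hr0, x, ?_⟩
    intro y hy
    apply hx
    obtain ⟨z, hz, rfl⟩ := hy
    exact ⟨z, (subset_convexHull ℝ _) (hpq hz), rfl⟩
  have hsub12 : ({p₁, p₂} : Set (Fin n → ℝ)) ⊆ ({p₁, p₂, p₃} : Set (Fin n → ℝ)) := by
    intro y hy
    simp only [Set.mem_insert_iff, Set.mem_singleton_iff] at hy ⊢
    tauto
  have hsub13 : ({p₁, p₃} : Set (Fin n → ℝ)) ⊆ ({p₁, p₂, p₃} : Set (Fin n → ℝ)) := by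
    intro y hy
    simp only [Set.mem_insert_iff, Set.mem_singleton_iff] at hy ⊢
    tauto
  have hsub23 : ({p₂, p₃} : Set (Fin n → ℝ)) ⊆ ({p₁, p₂, p₃} : Set (Fin n → ℝ)) := by
    intro y hy
    simp only [Set.mem_insert_iff, Set.mem_singleton_iff] at hy ⊢
    tauto
  have hmax : max R12 (max R13 R23) ≤ R123 := by
    apply max_le
    · rw [hR12]; exact hmono p₁ p₂ hsub12
    apply max_le
    · rw [hR13]; exact hmono p₁ p₃ hsub13
    · rw [hR23]; exact hmono p₂ p₃ hsub23
  -- part 3: the upper bound for R123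
  set Q : ℝ := a * (b + c - a) + b * (a + c - b) + c * (a + b - c) with hQ_def
  have hq1 : 0 ≤ a * (b + c - a) := mul_nonneg ha.le (sub_nonneg.mpr htri_a)
  have hq2 : 0 ≤ b * (a + c - b) := mul_nonneg hb.le (sub_nonneg.mpr htri_b)
  have hq3 : 0 ≤ c * (a + b - c) := mul_nonneg hc.le (sub_nonneg.mpr htri_c)
  have hbc : 0 < b * c := mul_pos hb hc
  have hQ : 0 < Q := by
    rw [hQ_def]
    nlinarith [hq1, hq2, hq3, hbc]
  set u : ℝ := a * (b + c - a) / Q with hu_def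
  set v : ℝ := b * (a + c - b) / Q with hv_def
  set w : ℝ := c * (a + b - c) / Q with hw_def
  have hu0 : 0 ≤ u := by
    apply div_nonneg _ hQ.le
    exact mul_nonneg ha.le (sub_nonneg.mpr htri_a)
  have hv0 : 0 ≤ v := by
    apply div_nonneg _ hQ.le
    exact mul_nonneg hb.le (sub_nonneg.mpr htri_b)
  have hw0 : 0 ≤ w := by
    apply div_nonneg _ hQ.le
    exact mul_nonneg hc.le (sub_nonneg.mpr htri_c)
  have hQ0 : Q ≠ 0 := hQ.ne'
  have huvw : u + v + w = 1 := by
    rw [hu_def, hv_def, hw_def, ← add_div, ← add_div,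
      div_eq_one_iff_eq hQ0, hQ_def]
  set rstar : ℝ := 2 * a * b * c / Q with hrstar_def
  have hrstar : 0 < rstar := by
    apply div_pos _ hQ
    positivity
  -- the center z
  set z : Fin n → ℝ := u • p₁ + v • p₂ + w • p₃ with hz_def
  have key : ∀ s t : ℝ, 0 ≤ s → 0 ≤ t → ∀ y₁ y₂ : Fin n → ℝ,
      gauge C (s • y₁ + t • y₂) ≤ s * gauge C y₁ + t * gauge C y₂ := by
    intro s t hs ht y₁ y₂
    calc gauge C (s • y₁ + t • y₂) ≤ gauge C (s • y₁) + gauge C (t • y₂) := gauge_tri _ _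
    _ = s * gauge C y₁ + t * gauge C y₂ := by
        rw [gauge_smul_of_nonneg hs, gauge_smul_of_nonneg ht, smul_eq_mul, smul_eq_mul]
  have hb1 : gauge C (-z + p₁) ≤ rstar := by
    have he : -z + p₁ = v • (p₁ - p₂) + w • (p₁ - p₃) := by
      rw [hz_def]
      have hvw : v + w = 1 - u := by linarith
      match_scalars <;> linarith
    rw [he]
    calc gauge C (v • (p₁ - p₂) + w • (p₁ - p₃)) ≤ v * c + w * b :=
      key v w hv0 hw0 _ _
    _ = rstar := by rw [hv_def, hw_def, hrstar_def]; field_simp; ring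
  have hb2 : gauge C (-z + p₂) ≤ rstar := by
    have he : -z + p₂ = u • -(p₁ - p₂) + w • (p₂ - p₃) := by
      rw [hz_def]
      match_scalars <;> linarith
    rw [he]
    calc gauge C (u • -(p₁ - p₂) + w • (p₂ - p₃))
        ≤ u * gauge C (-(p₁ - p₂)) + w * a := key u w hu0 hw0 _ _
    _ = u * c + w * a := by rw [gneg]
    _ = rstar := by rw [hu_def, hw_def, hrstar_def]; field_simp; ring
  have hb3 : gauge C (-z + p₃) ≤ rstar := by
    have he : -z + p₃ = u • -(p₁ - p₃) + v • -(p₂ - p₃) := by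
      rw [hz_def]
      match_scalars <;> linarith
    rw [he]
    calc gauge C (u • -(p₁ - p₃) + v • -(p₂ - p₃))
        ≤ u * gauge C (-(p₁ - p₃)) + v * gauge C (-(p₂ - p₃)) := key u v hu0 hv0 _ _
    _ = u * b + v * a := by rw [gneg, gneg]
    _ = rstar := by rw [hu_def, hv_def, hrstar_def]; field_simp; ring
  have hupper : R123 ≤ rstar := by
    rw [hR123]
    exact csInf_le (hFbdd _) (hfeas rstar hrstar (-z) hb1 hb2 hb3)
  have hR123nn : 0 ≤ R123 := by
    rw [hR123]
    exact Real.sInf_nonneg fun r hr => hr.1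
  have hsqrt3 : Real.sqrt 3 ≤ 2 := by
    nlinarith [Real.sq_sqrt (by norm_num : (0:ℝ) ≤ 3), Real.sqrt_nonneg 3]
  have hsqrt0 : 0 ≤ Real.sqrt 3 := Real.sqrt_nonneg 3
  clear_value z rstar w v u Q c b a
  refine ⟨⟨?_, ?_⟩, hmax, ?_⟩
  · rw [hR12', hR13', hR23']; linarith
  · rw [hR12', hR13', hR23']; linarith
  · rw [hR12', hR13', hR23']
    have hQR : Q * R123 ≤ 2 * a * b * c := by
      have := mul_le_mul_of_nonneg_left hupper hQ.le
      rw [hrstar_def] at this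
      calc Q * R123 ≤ Q * (2 * a * b * c / Q) := this
      _ = 2 * a * b * c := by field_simp
    have hexp : 2 * (c/2) * (b/2) + 2 * (c/2) * (a/2) + 2 * (b/2) * (a/2)
        - (c/2)^2 - (b/2)^2 - (a/2)^2 = Q / 4 := by rw [hQ_def]; ring
    rw [hexp]
    have h1 : Real.sqrt 3 * (Q / 4) * R123 ≤ 2 * (Q / 4) * R123 := by
      apply mul_le_mul_of_nonneg_right _ hR123nn
      apply mul_le_mul_of_nonneg_right hsqrt3 (by positivity)
    calc Real.sqrt 3 * (Q / 4) * R123 ≤ 2 * (Q / 4) * R123 := h1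
    _ = (Q * R123) / 2 := by ring
    _ ≤ (2 * a * b * c) / 2 := by linarith [hQR]
    _ = a * b * c := by ring
    _ = 8 * (c/2) * (b/2) * (a/2) := by ring
end
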